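/- Let p and ℓ be distinct primes and q a nonzero integer, and let ℤ_p(q) denote the representation of the infinite cyclic group ℤ on the ℤ_p-module ℤ_p in which a fixed generator of ℤ acts by multiplication by ℓ^q (a unit of ℤ_p). Then the group cohomology satisfies H^0(ℤ; ℤ_p(q)) = 0 and H^1(ℤ; ℤ_p(q)) ≅ ℤ_p/(ℓ^q − 1)ℤ_p, which is a finite cyclic group of order p^{v_p(ℓ^q − 1)}, where v_p denotes the p-adic valuation. -/

import Mathlib

open CategoryTheory

set_option synthInstance.maxHeartbeats 1000000
set_option maxHeartbeats 1000000

/-- The representation `ℤ_p(q)` of the infinite cyclic group `ℤ` (written multiplicatively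
as `Multiplicative ℤ`) on the `ℤ_p`-module `ℤ_p`, where a fixed generator acts by
multiplication by the unit `u ^ q` (with `u` the unit `ℓ` of `ℤ_p`). -/
noncomputable def twistRep (p : ℕ) [Fact p.Prime] (u : ℤ_[p]ˣ) (q : ℤ) :
    Representation ℤ_[p] (Multiplicative ℤ) ℤ_[p] :=
  ((Algebra.lmul ℤ_[p] ℤ_[p]).toRingHom.toMonoidHom).comp
    ((Units.coeHom ℤ_[p]).comp (zpowersHom ℤ_[p]ˣ (u ^ q)))

lemma exists_sigma {p : ℕ} [Fact p.Prime] (w : ℤ_[p]ˣ) : ∃ σ : ℤ → ℤ_[p],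
    ∀ n : ℤ, ((w : ℤ_[p]) - 1) * σ n = ((w ^ n : ℤ_[p]ˣ) : ℤ_[p]) - 1 := by
  refine ⟨fun n => if 0 ≤ n then ∑ i ∈ Finset.range n.toNat, (w : ℤ_[p]) ^ i
    else -((w ^ n : ℤ_[p]ˣ) : ℤ_[p]) * ∑ i ∈ Finset.range (-n).toNat, (w : ℤ_[p]) ^ i,
    fun n => ?_⟩
  dsimp only
  split_ifs with h
  · rw [mul_comm, geom_sum_mul]
    have : w ^ n = w ^ n.toNat := by rw [← zpow_natCast, Int.toNat_of_nonneg h]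
    rw [this, Units.val_pow_eq_pow_val]
  · set m := (-n).toNat with hm
    set z : ℤ_[p] := ((w ^ n : ℤ_[p]ˣ) : ℤ_[p]) with hz
    have h1 : z * (w : ℤ_[p]) ^ m = 1 := by
      rw [hz, ← Units.val_pow_eq_pow_val, ← Units.val_mul, ← zpow_natCast, ← zpow_add,
        show n + (m : ℤ) = 0 by omega, zpow_zero, Units.val_one]
    have h2 : ((w : ℤ_[p]) - 1) * ∑ i ∈ Finset.range m, (w : ℤ_[p]) ^ i
        = (w : ℤ_[p]) ^ m - 1 := by rw [mul_comm, geom_sum_mul]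
    calc ((w : ℤ_[p]) - 1) * (-z * ∑ i ∈ Finset.range m, (w : ℤ_[p]) ^ i)
        = -z * (((w : ℤ_[p]) - 1) * ∑ i ∈ Finset.range m, (w : ℤ_[p]) ^ i) := by ring
      _ = -z * ((w : ℤ_[p]) ^ m - 1) := by rw [h2]
      _ = -(z * (w : ℤ_[p]) ^ m) + z := by ring
      _ = z - 1 := by rw [h1]; ring

/-- For distinct primes `p ≠ ℓ` and a nonzero integer `q`, letting `ℤ_p(q)` be the
representation of the infinite cyclic group `ℤ` on `ℤ_p` where the generator acts by
multiplication by `ℓ^q`, one has `H⁰(ℤ; ℤ_p(q)) = 0` and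
`H¹(ℤ; ℤ_p(q)) ≅ ℤ_p/(ℓ^q - 1)ℤ_p`, a finite cyclic group of order
`p^{v_p(ℓ^q - 1)}`. -/
theorem stmt11 (p ℓ : ℕ) [Fact p.Prime] (hℓ : ℓ.Prime) (hne : ℓ ≠ p)
    (q : ℤ) (hq : q ≠ 0)
    (u : ℤ_[p]ˣ) (hu : (u : ℤ_[p]) = (ℓ : ℤ_[p])) :
    Subsingleton (groupCohomology (Rep.of (twistRep p u q)) 0) ∧
    Nonempty ((groupCohomology (Rep.of (twistRep p u q)) 1) ≃ₗ[ℤ_[p]]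
      (ℤ_[p] ⧸ Ideal.span {((u ^ q : ℤ_[p]ˣ) : ℤ_[p]) - 1})) ∧
    Nonempty ((ℤ_[p] ⧸ Ideal.span {((u ^ q : ℤ_[p]ˣ) : ℤ_[p]) - 1}) ≃+
      ZMod (p ^ (((u ^ q : ℤ_[p]ˣ) : ℤ_[p]) - 1).valuation)) := by
  set A : Rep ℤ_[p] (Multiplicative ℤ) := Rep.of (twistRep p u q) with hA
  set w : ℤ_[p]ˣ := u ^ q with hwdef
  set r : ℤ_[p] := (w : ℤ_[p]) with hrdef
  set z : ℤ → ℤ_[p] := fun n => ((w ^ n : ℤ_[p]ˣ) : ℤ_[p]) with hzdef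
  have hρ : ∀ (g : Multiplicative ℤ) (x : ℤ_[p]), A.ρ g x = z g.toAdd * x :=
    fun g x => rfl
  have hz0 : z 0 = 1 := by simp [hzdef]
  have hz1 : z 1 = r := by simp [hzdef, hrdef]
  have hzadd : ∀ m n : ℤ, z (m + n) = z m * z n := by
    intro m n; simp [hzdef, zpow_add]
  -- r - 1 ≠ 0
  have hr1 : r - 1 ≠ 0 := by
    intro h
    have hw1 : w = 1 := Units.ext (by rw [← sub_eq_zero]; exact h)
    have hwq : u ^ q = 1 := by rw [← hwdef]; exact hw1
    have hm : u ^ (q.natAbs : ℤ) = 1 := by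
      rcases Int.natAbs_eq q with h' | h'
      · rw [← h']; exact hwq
      · rw [show (q.natAbs : ℤ) = -q by omega, zpow_neg, hwq, inv_one]
    have hm' : (u : ℤ_[p]) ^ q.natAbs = 1 := by
      rw [← Units.val_pow_eq_pow_val, ← zpow_natCast, hm, Units.val_one]
    rw [hu] at hm'
    have : ((ℓ ^ q.natAbs : ℕ) : ℤ_[p]) = ((1 : ℕ) : ℤ_[p]) := by push_cast; exact hm'
    have hℓ1 : ℓ ^ q.natAbs = 1 := Nat.cast_injective this
    have h2 : 2 ≤ ℓ := hℓ.two_le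
    have hq' : q.natAbs ≠ 0 := by omega
    have := Nat.one_lt_pow hq' h2
    omega
  have hc : ∀ a b : ℤ_[p], (r - 1) * a = (r - 1) * b → a = b :=
    fun a b h => mul_left_cancel₀ hr1 h
  obtain ⟨σ, hσ⟩ := exists_sigma w
  have hσ' : ∀ n : ℤ, (r - 1) * σ n = z n - 1 := hσ
  have hσ0 : σ 0 = 0 := hc _ _ (by rw [hσ' 0, hz0, mul_zero, sub_self])
  have hσ1 : σ 1 = 1 := hc _ _ (by rw [hσ' 1, hz1, mul_one])
  have hσadd : ∀ m n : ℤ, σ (m + n) = z m * σ n + σ m := by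
    intro m n
    apply hc
    have h1 := hσ' (m + n)
    have h2 := hσ' n
    have h3 := hσ' m
    have h4 := hzadd m n
    rw [h1, h4]
    calc z m * z n - 1 = z m * (z n - 1) + (z m - 1) := by ring
      _ = z m * ((r - 1) * σ n) + (r - 1) * σ m := by rw [h2, h3]
      _ = (r - 1) * (z m * σ n + σ m) := by ring
  refine ⟨?_, ?_, ?_⟩
  · -- H⁰ = 0
    have hsub : Subsingleton A.ρ.invariants := by
      rw [subsingleton_iff_forall_eq 0]
      intro x
      obtain ⟨y, hy⟩ : ∃ y : ℤ_[p], y = x.1 := ⟨x.1, rfl⟩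
      have hx : y = A.ρ (Multiplicative.ofAdd 1) y := by
        rw [hy]; exact (x.2 (Multiplicative.ofAdd 1)).symm
      rw [hρ, show Multiplicative.toAdd (Multiplicative.ofAdd (1 : ℤ)) = 1 from rfl, hz1] at hx
      have hx2 : (r - 1) * y = 0 := by linear_combination -hx
      rcases mul_eq_zero.1 hx2 with h | h
      · exact absurd h hr1
      · apply Subtype.ext
        rw [← hy]
        exact h
    exact @Equiv.subsingleton _ _ (groupCohomology.H0Iso A).toLinearEquiv.toEquiv hsub
  · -- H¹ ≅ ℤ_p / (r - 1)
    -- evaluation of a cocycle, valued in ℤ_p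
    let E : groupCohomology.cocycles₁ A → Multiplicative ℤ → ℤ_[p] := fun f g => f.1 g
    -- the evaluation map at the generator
    let φ : groupCohomology.cocycles₁ A →ₗ[ℤ_[p]] ℤ_[p] :=
      { toFun := fun f => f.1 (Multiplicative.ofAdd 1)
        map_add' := fun f g => rfl
        map_smul' := fun c f => rfl }
    have hφE : ∀ f : groupCohomology.cocycles₁ A, φ f = E f (Multiplicative.ofAdd 1) :=
      fun f => rfl
    have hcoc : ∀ f : groupCohomology.cocycles₁ A, ∀ g h : Multiplicative ℤ,
        E f (g * h) = z g.toAdd * E f h + E f g := by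
      intro f g h
      have h1 := (groupCohomology.mem_cocycles₁_iff (A := A) f.1).1 f.2 g h
      rw [hρ] at h1
      exact h1
    -- every cocycle is determined by its value at the generator
    have hval : ∀ f : groupCohomology.cocycles₁ A, ∀ n : ℤ,
        E f (Multiplicative.ofAdd n) = σ n * E f (Multiplicative.ofAdd 1) := by
      intro f n
      induction n using Int.induction_on with
      | zero =>
        have h1 := hcoc f 1 1
        rw [mul_one, show Multiplicative.toAdd (1 : Multiplicative ℤ) = 0 from rfl,
          hz0, one_mul] at h1
        have h0 : E f (1 : Multiplicative ℤ) = 0 := by linear_combination -h1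
        rw [show Multiplicative.ofAdd (0 : ℤ) = 1 from rfl, h0, hσ0, zero_mul]
      | succ n ih =>
        have h1 := hcoc f (Multiplicative.ofAdd (n : ℤ)) (Multiplicative.ofAdd 1)
        rw [show Multiplicative.ofAdd (n : ℤ) * Multiplicative.ofAdd (1 : ℤ)
            = Multiplicative.ofAdd ((n : ℤ) + 1) from rfl] at h1
        rw [h1, ih, hσadd (n : ℤ) 1, hσ1, mul_one,
          show Multiplicative.toAdd (Multiplicative.ofAdd (n : ℤ)) = (n : ℤ) from rfl]
        ring
      | pred n ih =>
        have h1 := hcoc f (Multiplicative.ofAdd (-(n : ℤ) - 1)) (Multiplicative.ofAdd 1)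
        rw [show Multiplicative.ofAdd (-(n : ℤ) - 1) * Multiplicative.ofAdd (1 : ℤ)
            = Multiplicative.ofAdd (-(n : ℤ)) by rw [← ofAdd_add]; ring_nf] at h1
        rw [ih] at h1
        have h2 : E f (Multiplicative.ofAdd (-(n : ℤ) - 1))
            = (σ (-(n : ℤ)) - z (-(n : ℤ) - 1)) * E f (Multiplicative.ofAdd 1) := by
          rw [show Multiplicative.toAdd (Multiplicative.ofAdd (-(n : ℤ) - 1))
            = -(n : ℤ) - 1 from rfl] at h1
          linear_combination -h1
        rw [show (-(n : ℤ) - 1) = -((n : ℤ) + 1) by ring] at h2 ⊢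
        rw [h2]
        have h3 : σ (-((n : ℤ) + 1)) = σ (-(n : ℤ)) - z (-((n : ℤ) + 1)) := by
          have h4 := hσadd (-((n : ℤ) + 1)) 1
          rw [hσ1, mul_one, show (-((n : ℤ) + 1) + 1) = -(n : ℤ) by ring] at h4
          linear_combination -h4
        rw [h3]
    -- surjectivity of φ
    have hsurjφ : Function.Surjective φ := by
      intro a
      have hmem : (fun g : Multiplicative ℤ => σ g.toAdd * a) ∈
          groupCohomology.cocycles₁ A := by
        rw [groupCohomology.mem_cocycles₁_iff]
        intro g h
        rw [hρ]
        show σ (g * h).toAdd * a = z g.toAdd * (σ h.toAdd * a) + σ g.toAdd * a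
        rw [show (g * h).toAdd = g.toAdd + h.toAdd from rfl, hσadd g.toAdd h.toAdd]
        ring
      refine ⟨⟨_, hmem⟩, ?_⟩
      show σ (Multiplicative.ofAdd (1 : ℤ)).toAdd * a = a
      rw [show Multiplicative.toAdd (Multiplicative.ofAdd (1 : ℤ)) = 1 from rfl, hσ1, one_mul]
    -- coboundaries correspond to the ideal (r - 1)
    have hbd : ∀ f : groupCohomology.cocycles₁ A,
        f ∈ LinearMap.range (groupCohomology.shortComplexH1 A).moduleCatToCycles ↔
          φ f ∈ Ideal.span {r - 1} := by
      intro f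
      constructor
      · intro hf
        obtain ⟨c1, hc1⟩ : ∃ y : ℤ_[p], (groupCohomology.d₀₁ A).hom y = f.1 := by
          obtain ⟨y, hy⟩ := hf; exact ⟨y, congrArg Subtype.val hy⟩
        have hd : E f (Multiplicative.ofAdd 1) = (r - 1) * c1 := by
          have h5 : E f (Multiplicative.ofAdd 1)
              = (groupCohomology.d₀₁ A).hom c1 (Multiplicative.ofAdd 1) :=
            (congrFun hc1 (Multiplicative.ofAdd 1)).symm
          have h7 : (groupCohomology.d₀₁ A).hom c1 (Multiplicative.ofAdd 1) = z 1 * c1 - c1 := rfl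
          rw [h5, h7, hz1]
          ring
        refine Ideal.mem_span_singleton'.2 ⟨c1, ?_⟩
        show c1 * (r - 1) = E f (Multiplicative.ofAdd 1)
        rw [hd]; ring
      · intro hf
        obtain ⟨c, hcval⟩ := Ideal.mem_span_singleton'.1 hf
        have hcval' : c * (r - 1) = E f (Multiplicative.ofAdd 1) := by
          rw [hcval]; exact hφE f
        have hfc : f.1 = (groupCohomology.d₀₁ A).hom c := by
          funext g
          show E f g = z (Multiplicative.toAdd g) * c - c
          have hvg := hval f g.toAdd
          rw [show Multiplicative.ofAdd g.toAdd = g from rfl] at hvg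
          have h6 := hσ' g.toAdd
          linear_combination hvg - σ (Multiplicative.toAdd g) * hcval' + c * h6
        exact ⟨c, Subtype.ext hfc.symm⟩
    have hle : LinearMap.range (groupCohomology.shortComplexH1 A).moduleCatToCycles ≤
        Submodule.comap φ (Ideal.span {r - 1}) := fun f hf => (hbd f).1 hf
    let ψ : (LinearMap.ker (groupCohomology.shortComplexH1 A).g.hom ⧸
        LinearMap.range (groupCohomology.shortComplexH1 A).moduleCatToCycles) →ₗ[ℤ_[p]] (ℤ_[p] ⧸ Ideal.span {r - 1}) :=
      Submodule.mapQ _ _ φ hle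
    have hbij : Function.Bijective ψ := by
      constructor
      · rw [← LinearMap.ker_eq_bot, LinearMap.ker_eq_bot']
        intro m hm
        obtain ⟨f, rfl⟩ := Submodule.Quotient.mk_surjective _ m
        change Submodule.Quotient.mk (φ f) = 0 at hm
        rw [Submodule.Quotient.mk_eq_zero] at hm ⊢
        exact (hbd f).2 hm
      · intro y
        obtain ⟨a, rfl⟩ := Submodule.Quotient.mk_surjective _ y
        obtain ⟨f, hf⟩ := hsurjφ a
        exact ⟨Submodule.Quotient.mk f, by change Submodule.Quotient.mk (φ f) = _; rw [hf]⟩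
    exact ⟨(groupCohomology.H1Iso A).toLinearEquiv.trans (LinearEquiv.ofBijective ψ hbij)⟩
  · -- ℤ_p/(r-1) ≅ ZMod (p ^ v)
    set x : ℤ_[p] := r - 1 with hxdef
    have hx : x ≠ 0 := hr1
    set v : ℕ := x.valuation with hvdef
    have hna : x.valuation = v := rfl
    have hspan : Ideal.span {x} = Ideal.span {(p : ℤ_[p]) ^ v} := by
      have hspec := PadicInt.unitCoeff_spec hx
      rw [hna] at hspec
      exact (Ideal.span_singleton_eq_span_singleton.2
        ⟨PadicInt.unitCoeff hx, by rw [mul_comm]; exact hspec.symm⟩).symm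
    have hsurj : Function.Surjective (PadicInt.toZModPow (p := p) v) := by
      intro y
      refine ⟨((y.val : ℕ) : ℤ_[p]), ?_⟩
      rw [map_natCast, ZMod.natCast_val, ZMod.cast_id]
    have e2 : (ℤ_[p] ⧸ Ideal.span {x}) ≃+* ZMod (p ^ v) :=
      (Ideal.quotEquivOfEq (hspan.trans (PadicInt.ker_toZModPow v).symm)).trans
        (RingHom.quotientKerEquivOfSurjective hsurj)
    exact ⟨e2.toAddEquiv⟩
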